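/- Assume Π_A satisfies energy-band thermalization in the shell S (of cardinality d ≥ 1) with bandwidth ΔE > 0 and accuracy ε > 0, and let w be a weight function such that |w̃(δE)| ≤ w₀ for every |δE| ≥ ΔE, where w₀ ≥ 0. Let (ψ_k)_{k ∈ Fin d} be any orthonormal basis of the shell subspace, and for each k set λ_k := ∫_ℝ w(t) · ⟨ψ_k(t), Π_A ψ_k(t)⟩ dt − ⟨Π_A⟩_S, where ψ_k(t) := exp(−itH) ψ_k. Then for every λ > 0, the number of indices k ∈ Fin d with |λ_k| ≥ λ is strictly less than (√2 · d / λ) · (ε + w₀ · √(⟨Π_A⟩_S)). -/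

import Mathlib

open MeasureTheory Filter
open scoped ComplexOrder

namespace QET

variable {D : ℕ}

/-- `exp(-itH)` for the Hamiltonian `H = Σ_n (E n) • P_n`, where `P_n` is the orthogonal
projection onto the `n`-th vector of the fixed orthonormal eigenbasis `e`.  All operators are
written as matrices in this eigenbasis, so `H` is diagonal and
`exp(-itH) = diag (exp (-i t E n))`. -/
noncomputable def U (E : Fin D → ℝ) (t : ℝ) : Matrix (Fin D) (Fin D) ℂ :=
  Matrix.diagonal fun n => Complex.exp (-(Complex.I) * t * (E n))

/-- Time evolution `X(t) = exp(-itH) · X · exp(itH)`. -/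
noncomputable def evolve (E : Fin D → ℝ) (t : ℝ) (X : Matrix (Fin D) (Fin D) ℂ) :
    Matrix (Fin D) (Fin D) ℂ :=
  U E t * X * U E (-t)

/-- A state: a positive semidefinite operator with unit trace. -/
def IsState (ρ : Matrix (Fin D) (Fin D) ℂ) : Prop :=
  ρ.PosSemidef ∧ ρ.trace = 1

/-- An observable: an orthogonal projection (Hermitian idempotent). -/
def IsObservable (P : Matrix (Fin D) (Fin D) ℂ) : Prop :=
  P.IsHermitian ∧ P * P = P

/-- Orthogonal projection `Π_S` onto the energy shell spanned by `{e n : n ∈ S}`. -/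
noncomputable def shellProj (S : Finset (Fin D)) : Matrix (Fin D) (Fin D) ℂ :=
  Matrix.diagonal fun n => if n ∈ S then 1 else 0

/-- A state is supported on the shell of `S`: `Π_S ρ Π_S = ρ`. -/
def SupportedOn (S : Finset (Fin D)) (ρ : Matrix (Fin D) (Fin D) ℂ) : Prop :=
  shellProj S * ρ * shellProj S = ρ

/-- Thermal value `⟨P⟩_S = Tr(P Π_S)/d` (a real number: trace of Hermitian products below). -/
noncomputable def thermVal (S : Finset (Fin D)) (P : Matrix (Fin D) (Fin D) ℂ) : ℝ :=
  (P * shellProj S).trace.re / S.card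

/-- Fourier transform `w̃(E) = ∫ w(t) exp(-iEt) dt` of a weight function. -/
noncomputable def fourier (w : ℝ → ℝ) (En : ℝ) : ℂ :=
  ∫ t : ℝ, (w t : ℂ) * Complex.exp (-(Complex.I) * En * t)

/-- A weight function: integrable, nonnegative, normalized to `∫ w = 1`. -/
structure IsWeight (w : ℝ → ℝ) : Prop where
  integrable : Integrable w
  nonneg : ∀ t, 0 ≤ w t
  normalized : (∫ t : ℝ, w t) = 1

/-- A completely positive weight: a weight function whose Fourier transform is a
nonnegative real number everywhere. -/
structure IsCPWeight (w : ℝ → ℝ) extends IsWeight w : Prop where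
  fourier_im : ∀ En : ℝ, (fourier w En).im = 0
  fourier_nonneg : ∀ En : ℝ, 0 ≤ (fourier w En).re

/-- The matrix element `⟨e n, (P - ⟨P⟩_S · 1) e m⟩ = ⟨e n, P e m⟩ - ⟨P⟩_S δ_{nm}`. -/
noncomputable def devEl (S : Finset (Fin D)) (P : Matrix (Fin D) (Fin D) ℂ)
    (n m : Fin D) : ℂ :=
  P n m - if n = m then (thermVal S P : ℂ) else 0

/-- Band variance `Σ_{n,m ∈ S, |E n - E m| < ΔE} |⟨e n, P e m⟩ - ⟨P⟩_S δ_{nm}|²`. -/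
noncomputable def bandVar (S : Finset (Fin D)) (E : Fin D → ℝ) (ΔE : ℝ)
    (P : Matrix (Fin D) (Fin D) ℂ) : ℝ :=
  ∑ n ∈ S, ∑ m ∈ S,
    if |E n - E m| < ΔE then ‖devEl S P n m‖ ^ 2 else 0

/-- Energy-band thermalization in the shell `S` with bandwidth `ΔE` and accuracy `ε`. -/
def EnergyBandTherm (S : Finset (Fin D)) (E : Fin D → ℝ) (ΔE ε : ℝ)
    (P : Matrix (Fin D) (Fin D) ℂ) : Prop :=
  (1 / (S.card : ℝ)) * bandVar S E ΔE P < ε ^ 2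

/-- Expectation value `⟨v, P v⟩` of an operator in a vector. -/
noncomputable def expVal (P : Matrix (Fin D) (Fin D) ℂ) (v : Fin D → ℂ) : ℂ :=
  dotProduct (star v) (P.mulVec v)


open scoped Matrix


lemma psd_trace_re_nonneg {n : Type*} [Fintype n] [DecidableEq n] {A : Matrix n n ℂ}
    (hA : A.PosSemidef) : 0 ≤ A.trace.re := by
  rw [Matrix.trace, Complex.re_sum]
  refine Finset.sum_nonneg fun i _ => ?_
  have := hA.re_dotProduct_nonneg (Pi.single i 1)
  simpa [dotProduct, Matrix.mulVec, Pi.single_apply, Finset.sum_ite_eq,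
    Matrix.diag] using this

lemma trace_mul_proj_le {n : Type*} [Fintype n] [DecidableEq n] {A P : Matrix n n ℂ}
    (hA : A.PosSemidef) (hPh : Pᴴ = P) (hP2 : P * P = P) :
    (A * P).trace.re ≤ A.trace.re := by
  have key : 0 ≤ ((1 - P) * A * (1 - P)).trace.re := by
    refine psd_trace_re_nonneg ?_
    have h : (1 - P)ᴴ = (1 - P) := by simp [hPh]
    have := hA.mul_mul_conjTranspose_same (1 - P)
    rwa [h] at this
  have hcalc : ((1 - P) * A * (1 - P)).trace = A.trace - (A * P).trace := by
    have h1 : ((1 - P) * A * (1 - P)).trace = (A * ((1 - P) * (1 - P))).trace := by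
      rw [Matrix.mul_assoc, Matrix.trace_mul_comm, Matrix.mul_assoc]
    have h2 : (1 - P) * (1 - P) = 1 - P := by
      simp [Matrix.mul_sub, Matrix.sub_mul, hP2]
    rw [h1, h2, Matrix.mul_sub, Matrix.mul_one, Matrix.trace_sub]
  have h3 := hcalc ▸ key
  simp only [Complex.sub_re] at h3
  linarith

lemma frob_trace {n m : Type*} [Fintype n] [Fintype m] (A : Matrix n m ℂ) :
    (A * Aᴴ).trace.re = ∑ i, ∑ j, ‖A i j‖ ^ 2 := by
  simp only [Matrix.trace, Matrix.diag, Matrix.mul_apply, Matrix.conjTranspose_apply,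
    Complex.re_sum, Complex.sq_norm]
  congr 1; ext i; congr 1; ext j
  have : A i j * star (A i j) = (Complex.normSq (A i j) : ℂ) := Complex.mul_conj _
  rw [this, Complex.ofReal_re, Complex.normSq_eq_norm_sq]

lemma key_quad {d D : ℕ} (ψ : Fin d → Fin D → ℂ)
    (hon : ∀ k l, dotProduct (star (ψ k)) (ψ l) = if k = l then 1 else 0)
    (M : Matrix (Fin D) (Fin D) ℂ) :
    ∑ k, ‖∑ n, ∑ m, (starRingEnd ℂ) (ψ k n) * (M n m * ψ k m)‖ ^ 2 ≤
      ∑ n, ∑ m, ‖M n m‖ ^ 2 := by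
  set V : Matrix (Fin D) (Fin d) ℂ := Matrix.of fun n k => ψ k n with hVdef
  have hV : Vᴴ * V = 1 := by
    ext k l
    simpa [hVdef, Matrix.mul_apply, Matrix.conjTranspose_apply, Matrix.one_apply, dotProduct]
      using hon k l
  set A : Matrix (Fin d) (Fin d) ℂ := Vᴴ * M * V with hAdef
  have hAkk : ∀ k, A k k = ∑ n, ∑ m, (starRingEnd ℂ) (ψ k n) * (M n m * ψ k m) := by
    intro k
    simp only [hAdef, Matrix.mul_apply, Matrix.conjTranspose_apply, Matrix.of_apply,
      Finset.sum_mul]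
    rw [Finset.sum_comm]
    simp [hVdef, mul_assoc]
  have step1 : ∑ k, ‖A k k‖ ^ 2 ≤ ∑ k, ∑ l, ‖A k l‖ ^ 2 := by
    refine Finset.sum_le_sum fun k _ => ?_
    exact Finset.single_le_sum (f := fun l => ‖A k l‖ ^ 2)
      (fun l _ => sq_nonneg _) (Finset.mem_univ k)
  have step2 : ∑ k, ∑ l, ‖A k l‖ ^ 2 = (A * Aᴴ).trace.re := (frob_trace A).symm
  set P : Matrix (Fin D) (Fin D) ℂ := V * Vᴴ with hPdef
  have hPpsd : P.PosSemidef := Matrix.posSemidef_self_mul_conjTranspose V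
  have hPh : Pᴴ = P := hPpsd.1
  have hP2 : P * P = P := by
    rw [hPdef]
    calc V * Vᴴ * (V * Vᴴ) = V * (Vᴴ * V) * Vᴴ := by
          simp only [Matrix.mul_assoc]
    _ = V * Vᴴ := by rw [hV, Matrix.mul_one]
  have hAH : Aᴴ = Vᴴ * Mᴴ * V := by
    simp [hAdef, Matrix.conjTranspose_mul, Matrix.mul_assoc]
  have step3 : (A * Aᴴ).trace = (M * P * Mᴴ * P).trace := by
    rw [hAH, hAdef]
    calc (Vᴴ * M * V * (Vᴴ * Mᴴ * V)).trace
        = (Vᴴ * (M * V * (Vᴴ * Mᴴ * V))).trace := by simp only [Matrix.mul_assoc]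
      _ = (M * V * (Vᴴ * Mᴴ * V) * Vᴴ).trace := by rw [Matrix.trace_mul_comm]
      _ = (M * P * Mᴴ * P).trace := by rw [hPdef]; simp only [Matrix.mul_assoc]
  have psd1 : (M * P * Mᴴ).PosSemidef := hPpsd.mul_mul_conjTranspose_same M
  have step4 : (M * P * Mᴴ * P).trace.re ≤ (M * P * Mᴴ).trace.re :=
    trace_mul_proj_le psd1 hPh hP2
  have step5 : (M * P * Mᴴ).trace = (Mᴴ * M * P).trace := by
    calc (M * P * Mᴴ).trace = (Mᴴ * (M * P)).trace := Matrix.trace_mul_comm _ _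
      _ = (Mᴴ * M * P).trace := by rw [Matrix.mul_assoc]
  have psd2 : (Mᴴ * M).PosSemidef := Matrix.posSemidef_conjTranspose_mul_self M
  have step6 : (Mᴴ * M * P).trace.re ≤ (Mᴴ * M).trace.re := trace_mul_proj_le psd2 hPh hP2
  have step7 : (Mᴴ * M).trace = (M * Mᴴ).trace := Matrix.trace_mul_comm _ _
  calc ∑ k, ‖∑ n, ∑ m, (starRingEnd ℂ) (ψ k n) * (M n m * ψ k m)‖ ^ 2
      = ∑ k, ‖A k k‖ ^ 2 := by simp_rw [hAkk]
    _ ≤ ∑ k, ∑ l, ‖A k l‖ ^ 2 := step1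
    _ = (A * Aᴴ).trace.re := step2
    _ = (M * P * Mᴴ * P).trace.re := by rw [step3]
    _ ≤ (M * P * Mᴴ).trace.re := step4
    _ = (Mᴴ * M * P).trace.re := by rw [step5]
    _ ≤ (Mᴴ * M).trace.re := step6
    _ = (M * Mᴴ).trace.re := by rw [step7]
    _ = ∑ n, ∑ m, ‖M n m‖ ^ 2 := frob_trace M

lemma weight_integrand_integrable {w : ℝ → ℝ} (hw : IsWeight w) (a : ℝ) :
    Integrable fun t : ℝ => (w t : ℂ) * Complex.exp (-(Complex.I) * a * t) := by
  have h1 : Integrable fun t : ℝ => ((w t : ℂ)) := hw.integrable.ofReal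
  have h2 : Integrable fun t : ℝ => Complex.exp (-(Complex.I) * a * t) * (w t : ℂ) := by
    refine h1.bdd_mul (c := 1) ?_ (ae_of_all _ fun t => ?_)
    · exact (Complex.continuous_exp.comp (by continuity)).aestronglyMeasurable
    · rw [Complex.norm_exp]
      simp
  simpa [mul_comm] using h2

lemma norm_fourier_le_one {w : ℝ → ℝ} (hw : IsWeight w) (a : ℝ) :
    ‖fourier w a‖ ≤ 1 := by
  have h := norm_integral_le_integral_norm (μ := volume)
    (f := fun t : ℝ => (w t : ℂ) * Complex.exp (-(Complex.I) * a * t))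
  have heq : ∀ t : ℝ, ‖(w t : ℂ) * Complex.exp (-(Complex.I) * a * t)‖ = w t := by
    intro t
    rw [norm_mul]
    simp [Complex.norm_exp, abs_of_nonneg (hw.nonneg t)]
  calc ‖fourier w a‖ ≤ ∫ t : ℝ, ‖(w t : ℂ) * Complex.exp (-(Complex.I) * a * t)‖ := h
    _ = ∫ t : ℝ, w t := by simp_rw [heq]
    _ = 1 := hw.normalized

lemma fourier_zero {w : ℝ → ℝ} (hw : IsWeight w) : fourier w 0 = 1 := by
  unfold fourier
  simp only [Complex.ofReal_zero, mul_zero, zero_mul, Complex.exp_zero, mul_one]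
  have h : (∫ t : ℝ, ((w t : ℝ) : ℂ)) = (((∫ t : ℝ, w t) : ℝ) : ℂ) := integral_ofReal
  rw [h, hw.normalized, Complex.ofReal_one]

lemma integral_expand {D : ℕ} (E : Fin D → ℝ) (PiA : Matrix (Fin D) (Fin D) ℂ)
    {w : ℝ → ℝ} (hw : IsWeight w) (ψ : Fin D → ℂ) :
    (∫ t : ℝ, (w t : ℂ) * expVal PiA ((U E t).mulVec ψ)) =
    ∑ n, ∑ m, (starRingEnd ℂ) (ψ n) * (PiA n m * ψ m) * fourier w (E m - E n) := by
  have point : ∀ t : ℝ, (w t : ℂ) * expVal PiA ((U E t).mulVec ψ) =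
      ∑ n, ∑ m, (starRingEnd ℂ) (ψ n) * (PiA n m * ψ m) *
        ((w t : ℂ) * Complex.exp (-(Complex.I) * ((E m - E n : ℝ) : ℂ) * t)) := by
    intro t
    have hv : (U E t).mulVec ψ = fun n => Complex.exp (-(Complex.I) * t * (E n)) * ψ n := by
      funext n; simp [U, Matrix.mulVec_diagonal]
    rw [hv]
    simp only [expVal, dotProduct, Matrix.mulVec, Pi.star_apply, Finset.mul_sum]
    refine Finset.sum_congr rfl fun n _ => ?_
    refine Finset.sum_congr rfl fun m _ => ?_
    have hc : star (Complex.exp (-(Complex.I) * t * (E n)) * ψ n) =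
        Complex.exp (Complex.I * t * (E n)) * (starRingEnd ℂ) (ψ n) := by
      rw [star_mul']
      congr 1
      rw [show star (Complex.exp (-(Complex.I) * t * (E n))) =
          (starRingEnd ℂ) (Complex.exp (-(Complex.I) * t * (E n))) from rfl,
        ← Complex.exp_conj]
      congr 1
      simp
    have hexp : Complex.exp (Complex.I * t * (E n)) *
        Complex.exp (-(Complex.I) * t * (E m)) =
        Complex.exp (-(Complex.I) * ((E m - E n : ℝ) : ℂ) * t) := by
      rw [← Complex.exp_add]; congr 1; push_cast; ring
    rw [hc, ← hexp]
    ring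
  calc (∫ t : ℝ, (w t : ℂ) * expVal PiA ((U E t).mulVec ψ))
      = ∫ t : ℝ, ∑ n, ∑ m, (starRingEnd ℂ) (ψ n) * (PiA n m * ψ m) *
          ((w t : ℂ) * Complex.exp (-(Complex.I) * ((E m - E n : ℝ) : ℂ) * t)) := by
        simp_rw [point]
    _ = ∑ n, ∑ m, (starRingEnd ℂ) (ψ n) * (PiA n m * ψ m) * fourier w (E m - E n) := by
        rw [integral_finset_sum]
        · refine Finset.sum_congr rfl fun n _ => ?_
          rw [integral_finset_sum]
          · refine Finset.sum_congr rfl fun m _ => ?_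
            rw [integral_const_mul]
            rfl
          · intro m _
            exact (weight_integrand_integrable hw (E m - E n)).const_mul _
        · intro n _
          exact integrable_finset_sum _ fun m _ =>
            (weight_integrand_integrable hw (E m - E n)).const_mul _


lemma shellProj_herm {D : ℕ} (S : Finset (Fin D)) : (shellProj S)ᴴ = shellProj S := by
  unfold shellProj
  ext i j
  by_cases h : i = j
  · subst h
    simp only [Matrix.conjTranspose_apply, Matrix.diagonal_apply_eq]
    split_ifs <;> simp
  · simp [Matrix.conjTranspose_apply, Matrix.diagonal_apply_ne _ h,
      Matrix.diagonal_apply_ne _ (Ne.symm h)]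

lemma shellProj_idem {D : ℕ} (S : Finset (Fin D)) :
    shellProj S * shellProj S = shellProj S := by
  unfold shellProj
  rw [Matrix.diagonal_mul_diagonal]
  ext i j
  by_cases h : i = j
  · subst h
    simp only [Matrix.diagonal_apply_eq]
    split_ifs <;> simp
  · simp [Matrix.diagonal_apply_ne _ h]

lemma shellProj_psd {D : ℕ} (S : Finset (Fin D)) : (shellProj S).PosSemidef := by
  unfold shellProj
  refine Matrix.PosSemidef.diagonal fun n => ?_
  split_ifs
  · exact zero_le_one
  · exact le_refl 0

lemma trace_shellProj_mul {D : ℕ} (S : Finset (Fin D)) (X : Matrix (Fin D) (Fin D) ℂ) :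
    (shellProj S * X).trace = ∑ n ∈ S, X n n := by
  unfold shellProj
  rw [Matrix.trace]
  have h : ∀ n, (Matrix.diagonal (fun n => if n ∈ S then (1:ℂ) else 0) * X).diag n =
      if n ∈ S then X n n else 0 := by
    intro n
    simp [Matrix.diag, Matrix.diagonal_mul, ite_mul]
  simp_rw [h]
  rw [Finset.sum_ite_mem, Finset.univ_inter]

lemma shell_frobenius_le {D : ℕ} (S : Finset (Fin D)) (PiA : Matrix (Fin D) (Fin D) ℂ)
    (hH : PiA.IsHermitian) (h2 : PiA * PiA = PiA) :
    ∑ n ∈ S, ∑ m ∈ S, ‖PiA n m‖ ^ 2 ≤ ((PiA * shellProj S).trace).re := by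
  have hPrh : (shellProj S)ᴴ = shellProj S := shellProj_herm S
  have hPr2 : shellProj S * shellProj S = shellProj S := shellProj_idem S
  have hPrpsd : (shellProj S).PosSemidef := shellProj_psd S
  set Pr : Matrix (Fin D) (Fin D) ℂ := shellProj S with hPr
  have e1 : ∑ n ∈ S, ∑ m ∈ S, ‖PiA n m‖ ^ 2 =
      ((Pr * (PiA * Pr * PiAᴴ)).trace).re := by
    rw [hPr, trace_shellProj_mul, Complex.re_sum]
    refine Finset.sum_congr rfl fun n _ => ?_
    have hdiag : (PiA * shellProj S * PiAᴴ) n n =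
        ∑ m, (if m ∈ S then PiA n m * star (PiA n m) else 0) := by
      rw [Matrix.mul_apply]
      refine Finset.sum_congr rfl fun m _ => ?_
      rw [Matrix.conjTranspose_apply]
      have e : (PiA * shellProj S) n m = PiA n m * (if m ∈ S then 1 else 0) := by
        unfold shellProj
        rw [Matrix.mul_diagonal]
      rw [e]
      split_ifs with h
      · rw [mul_one]
      · rw [mul_zero, zero_mul]
    rw [hdiag, Complex.re_sum]
    simp only [show ∀ m : Fin D, ((if m ∈ S then PiA n m * star (PiA n m) else 0) : ℂ).re =
        if m ∈ S then ‖PiA n m‖ ^ 2 else 0 from fun m => by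
      split_ifs
      · rw [show PiA n m * star (PiA n m) = ((Complex.normSq (PiA n m) : ℝ) : ℂ) from
          Complex.mul_conj _, Complex.ofReal_re, Complex.normSq_eq_norm_sq]
      · simp]
    rw [Finset.sum_ite_mem, Finset.univ_inter]
  have psdA : (PiAᴴ * Pr * PiA).PosSemidef := hPrpsd.conjTranspose_mul_mul_same PiA
  have e2 : (Pr * (PiA * Pr * PiAᴴ)).trace = ((PiAᴴ * Pr * PiA) * Pr).trace := by
    rw [Matrix.trace_mul_comm]
    rw [show PiA * Pr * PiAᴴ * Pr = (PiA * Pr) * (PiAᴴ * Pr) by simp only [Matrix.mul_assoc]]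
    rw [Matrix.trace_mul_comm]
    simp only [Matrix.mul_assoc]
  have e3 : ((PiAᴴ * Pr * PiA) * Pr).trace.re ≤ (PiAᴴ * Pr * PiA).trace.re :=
    trace_mul_proj_le psdA hPrh hPr2
  have e4 : (PiAᴴ * Pr * PiA).trace = (PiA * Pr).trace := by
    calc (PiAᴴ * Pr * PiA).trace = (PiAᴴ * (Pr * PiA)).trace := by rw [Matrix.mul_assoc]
      _ = ((Pr * PiA) * PiAᴴ).trace := Matrix.trace_mul_comm _ _
      _ = (Pr * (PiA * PiAᴴ)).trace := by rw [Matrix.mul_assoc]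
      _ = (Pr * PiA).trace := by rw [hH.eq, h2]
      _ = (PiA * Pr).trace := Matrix.trace_mul_comm _ _
  rw [e1, e2]
  rw [← e4]
  exact e3

lemma thermVal_nonneg {D : ℕ} (S : Finset (Fin D)) (PiA : Matrix (Fin D) (Fin D) ℂ)
    (hH : PiA.IsHermitian) (h2 : PiA * PiA = PiA) : 0 ≤ thermVal S PiA := by
  have hPrh : (shellProj S)ᴴ = shellProj S := shellProj_herm S
  have hPr2 : shellProj S * shellProj S = shellProj S := shellProj_idem S
  have psd : PiA.PosSemidef := by
    have : PiA = PiAᴴ * PiA := by rw [hH.eq]; exact h2.symm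
    rw [this]
    exact Matrix.posSemidef_conjTranspose_mul_self PiA
  have h3 := psd.conjTranspose_mul_mul_same (shellProj S)
  rw [hPrh] at h3
  have h4 : (PiA * shellProj S).trace = (shellProj S * PiA * shellProj S).trace := by
    calc (PiA * shellProj S).trace = (PiA * (shellProj S * shellProj S)).trace := by rw [hPr2]
      _ = ((PiA * shellProj S) * shellProj S).trace := by rw [Matrix.mul_assoc]
      _ = (shellProj S * (PiA * shellProj S)).trace := Matrix.trace_mul_comm _ _
      _ = (shellProj S * PiA * shellProj S).trace := by rw [Matrix.mul_assoc]
  unfold thermVal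
  apply div_nonneg _ (Nat.cast_nonneg _)
  rw [h4]
  exact psd_trace_re_nonneg h3

lemma sum_abs_le_sqrt {d : ℕ} (f : Fin d → ℝ) (hf : ∀ k, 0 ≤ f k) :
    ∑ k, f k ≤ Real.sqrt (d * ∑ k, f k ^ 2) := by
  have h := Finset.sum_mul_sq_le_sq_mul_sq Finset.univ (fun _ => (1:ℝ)) f
  rw [← Real.sqrt_sq (Finset.sum_nonneg fun k _ => hf k)]
  apply Real.sqrt_le_sqrt
  simpa [Finset.card_univ] using h


set_option maxHeartbeats 2000000 in
/-- **Energy-band thermalization implies almost all physical basis states thermalize o.a.**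
If `Π_A` satisfies energy-band thermalization in the shell `S` (of cardinality `d ≥ 1`)
with bandwidth `ΔE > 0` and accuracy `ε > 0`, and `w` is a weight function with
`|w̃(δE)| ≤ w₀` whenever `|δE| ≥ ΔE`, then for any orthonormal basis `(ψ_k)_{k ∈ Fin d}` of
the shell subspace and any `λ > 0`, the number of `k` with
`|∫ w(t) ⟨ψ_k(t), Π_A ψ_k(t)⟩ dt - ⟨Π_A⟩_S| ≥ λ` is `< (√2 d / λ)(ε + w₀ √⟨Π_A⟩_S)`. -/
theorem energy_band_thermalization_implies_almost_all_basis_states_thermalize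
    {D : ℕ} (hD : 0 < D) (E : Fin D → ℝ)
    (S : Finset (Fin D)) (hd : 1 ≤ S.card)
    (PiA : Matrix (Fin D) (Fin D) ℂ) (hPiA : IsObservable PiA)
    (ΔE ε : ℝ) (hΔE : 0 < ΔE) (hε : 0 < ε)
    (hEBT : EnergyBandTherm S E ΔE ε PiA)
    (w : ℝ → ℝ) (hw : IsWeight w) (w₀ : ℝ) (hw₀ : 0 ≤ w₀)
    (hband : ∀ δE : ℝ, ΔE ≤ |δE| → ‖fourier w δE‖ ≤ w₀)
    (ψ : Fin S.card → (Fin D → ℂ))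
    (hshell : ∀ k, (shellProj S).mulVec (ψ k) = ψ k)
    (hon : ∀ k l, dotProduct (star (ψ k)) (ψ l) = if k = l then 1 else 0)
    (lam : ℝ) (hlam : 0 < lam) :
    ((Finset.univ.filter fun k : Fin S.card =>
        lam ≤ ‖(∫ t : ℝ, (w t : ℂ) * expVal PiA ((U E t).mulVec (ψ k))) -
          (thermVal S PiA : ℂ)‖).card : ℝ)
      < (Real.sqrt 2 * S.card / lam) * (ε + w₀ * Real.sqrt (thermVal S PiA)) := by
  classical
  have hcard : (0:ℝ) < S.card := by exact_mod_cast Nat.lt_of_lt_of_le Nat.zero_lt_one hd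
  set tV : ℝ := thermVal S PiA with htV
  have hsupp : ∀ k n, n ∉ S → ψ k n = 0 := by
    intro k n hn
    have h := congrFun (hshell k) n
    unfold shellProj at h
    rw [Matrix.mulVec_diagonal, if_neg hn, zero_mul] at h
    exact h.symm
  set Mb : Matrix (Fin D) (Fin D) ℂ := Matrix.of fun n m =>
    if n ∈ S ∧ m ∈ S ∧ |E n - E m| < ΔE then fourier w (E m - E n) * devEl S PiA n m else 0
    with hMb
  set Mo : Matrix (Fin D) (Fin D) ℂ := Matrix.of fun n m =>
    if n ∈ S ∧ m ∈ S ∧ ¬(|E n - E m| < ΔE) then fourier w (E m - E n) * devEl S PiA n m else 0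
    with hMo
  set B : Fin S.card → ℂ := fun k => ∑ n, ∑ m, (starRingEnd ℂ) (ψ k n) * (Mb n m * ψ k m)
    with hB
  set O : Fin S.card → ℂ := fun k => ∑ n, ∑ m, (starRingEnd ℂ) (ψ k n) * (Mo n m * ψ k m)
    with hO
  -- the key identity
  have lamk : ∀ k, (∫ t : ℝ, (w t : ℂ) * expVal PiA ((U E t).mulVec (ψ k))) - (tV : ℂ)
      = B k + O k := by
    intro k
    rw [integral_expand E PiA hw (ψ k)]
    have split : ∀ n m : Fin D,
        (starRingEnd ℂ) (ψ k n) * (PiA n m * ψ k m) * fourier w (E m - E n)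
          = (starRingEnd ℂ) (ψ k n) * (Mb n m * ψ k m)
            + (starRingEnd ℂ) (ψ k n) * (Mo n m * ψ k m)
            + (if n = m then (starRingEnd ℂ) (ψ k n) * ψ k n * (tV : ℂ) else 0) := by
      intro n m
      by_cases hn : n ∈ S
      · by_cases hm : m ∈ S
        · by_cases hnm : n = m
          · subst hnm
            have hband : |E n - E n| < ΔE := by simpa using hΔE
            have hf0 : fourier w (E n - E n) = 1 := by
              rw [sub_self]; exact fourier_zero hw
            simp only [hMb, hMo, Matrix.of_apply, devEl]
            rw [if_pos (⟨hn, hn, hband⟩ : n ∈ S ∧ n ∈ S ∧ |E n - E n| < ΔE),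
              if_neg (show ¬(n ∈ S ∧ n ∈ S ∧ ¬|E n - E n| < ΔE) by tauto), hf0]
            simp only [if_pos rfl, if_true, eq_self_iff_true]
            ring
          · by_cases hb : |E n - E m| < ΔE
            · simp only [hMb, hMo, Matrix.of_apply, devEl]
              rw [if_pos (⟨hn, hm, hb⟩ : n ∈ S ∧ m ∈ S ∧ |E n - E m| < ΔE),
                if_neg (show ¬(n ∈ S ∧ m ∈ S ∧ ¬|E n - E m| < ΔE) by tauto),
                if_neg hnm, if_neg hnm]
              ring
            · simp only [hMb, hMo, Matrix.of_apply, devEl]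
              rw [if_neg (show ¬(n ∈ S ∧ m ∈ S ∧ |E n - E m| < ΔE) by tauto),
                if_pos (⟨hn, hm, hb⟩ : n ∈ S ∧ m ∈ S ∧ ¬|E n - E m| < ΔE),
                if_neg hnm, if_neg hnm]
              ring
        · have h0 : ψ k m = 0 := hsupp k m hm
          have hnm : ¬ n = m := fun h => hm (h ▸ hn)
          simp [hMb, hMo, h0, hm, hnm]
      · have h0 : ψ k n = 0 := hsupp k n hn
        simp [hMb, hMo, h0, hn]
    have hsum : ∑ n, ∑ m,
        (starRingEnd ℂ) (ψ k n) * (PiA n m * ψ k m) * fourier w (E m - E n)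
        = B k + O k + (tV : ℂ) := by
      simp_rw [split]
      rw [hB, hO]
      simp only [Finset.sum_add_distrib]
      congr 1
      have hdiag : ∀ n : Fin D,
          ∑ m, (if n = m then (starRingEnd ℂ) (ψ k n) * ψ k n * (tV : ℂ) else 0)
            = (starRingEnd ℂ) (ψ k n) * ψ k n * (tV : ℂ) :=
        fun n => (Finset.sum_ite_eq Finset.univ n _).trans (if_pos (Finset.mem_univ n))
      simp_rw [hdiag]
      have h1 := hon k k
      simp only [if_pos rfl] at h1
      unfold dotProduct at h1
      calc ∑ n, (starRingEnd ℂ) (ψ k n) * ψ k n * (tV : ℂ)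
          = (∑ n, (starRingEnd ℂ) (ψ k n) * ψ k n) * (tV : ℂ) := by
            rw [Finset.sum_mul]
        _ = (tV : ℂ) := by
            rw [show ∑ n, (starRingEnd ℂ) (ψ k n) * ψ k n
                = ∑ n, star (ψ k) n * ψ k n from rfl, h1]
            simp
    rw [hsum]
    ring
  -- band bounds
  have hBsq : ∑ k, ‖B k‖ ^ 2 ≤ ∑ n, ∑ m, ‖Mb n m‖ ^ 2 :=
    key_quad ψ hon Mb
  have hMbF : ∑ n, ∑ m, ‖Mb n m‖ ^ 2 ≤ bandVar S E ΔE PiA := by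
    unfold bandVar
    have step : ∀ n m : Fin D, ‖Mb n m‖ ^ 2 ≤
        if n ∈ S ∧ m ∈ S ∧ |E n - E m| < ΔE then ‖devEl S PiA n m‖ ^ 2 else 0 := by
      intro n m
      by_cases h : n ∈ S ∧ m ∈ S ∧ |E n - E m| < ΔE
      · rw [if_pos h]
        simp only [hMb, Matrix.of_apply]
        rw [if_pos h, norm_mul]
        have h1 := norm_fourier_le_one hw (E m - E n)
        have h2 := norm_nonneg (fourier w (E m - E n))
        have h3 := norm_nonneg (devEl S PiA n m)
        rw [mul_pow]
        have ha2 : ‖fourier w (E m - E n)‖ ^ 2 ≤ 1 := by nlinarith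
        nlinarith [mul_le_mul_of_nonneg_right ha2 (sq_nonneg (‖devEl S PiA n m‖))]
      · rw [if_neg h]
        simp only [hMb, Matrix.of_apply]
        rw [if_neg h, norm_zero]
        simp
    calc ∑ n, ∑ m, ‖Mb n m‖ ^ 2
        ≤ ∑ n : Fin D, ∑ m : Fin D,
          (if n ∈ S ∧ m ∈ S ∧ |E n - E m| < ΔE
            then ‖devEl S PiA n m‖ ^ 2 else 0) :=
          Finset.sum_le_sum fun n _ => Finset.sum_le_sum fun m _ => step n m
      _ = ∑ n ∈ S, ∑ m ∈ S,
          (if |E n - E m| < ΔE then ‖devEl S PiA n m‖ ^ 2 else 0) := by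
          rw [← Finset.sum_subset (Finset.subset_univ S) (fun n _ hn => by simp [hn])]
          refine Finset.sum_congr rfl fun n hn => ?_
          rw [← Finset.sum_subset (Finset.subset_univ S) (fun m _ hm => by simp [hm])]
          exact Finset.sum_congr rfl fun m hm => by simp [hn, hm]
  have hbv : bandVar S E ΔE PiA < (S.card : ℝ) * ε ^ 2 := by
    have h := hEBT
    unfold EnergyBandTherm at h
    have h2 : bandVar S E ΔE PiA = (S.card : ℝ) * ((1 / (S.card : ℝ)) * bandVar S E ΔE PiA) := by
      field_simp
    rw [h2]
    exact mul_lt_mul_of_pos_left h hcard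
  have hBabs_nonneg : ∀ k, 0 ≤ ‖B k‖ := fun k => norm_nonneg _
  have hBsum : ∑ k, ‖B k‖ < (S.card : ℝ) * ε := by
    have c1 := sum_abs_le_sqrt (fun k => ‖B k‖) hBabs_nonneg
    have c2 : Real.sqrt ((S.card : ℝ) * ∑ k, ‖B k‖ ^ 2) < (S.card : ℝ) * ε := by
      rw [Real.sqrt_lt' (by positivity)]
      calc (S.card : ℝ) * ∑ k, ‖B k‖ ^ 2
          ≤ (S.card : ℝ) * bandVar S E ΔE PiA :=
            mul_le_mul_of_nonneg_left (le_trans hBsq hMbF) hcard.le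
        _ < (S.card : ℝ) * ((S.card : ℝ) * ε ^ 2) := mul_lt_mul_of_pos_left hbv hcard
        _ = ((S.card : ℝ) * ε) ^ 2 := by ring
    calc ∑ k, ‖B k‖
        ≤ Real.sqrt ((S.card : ℝ) * ∑ k, ‖B k‖ ^ 2) := by
          simpa using c1
      _ < (S.card : ℝ) * ε := c2
  -- off-band bounds
  have hOsq : ∑ k, ‖O k‖ ^ 2 ≤ ∑ n, ∑ m, ‖Mo n m‖ ^ 2 :=
    key_quad ψ hon Mo
  have htr : ((PiA * shellProj S).trace).re = (S.card : ℝ) * tV := by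
    rw [htV]
    unfold thermVal
    field_simp
  have htVnn : 0 ≤ tV := thermVal_nonneg S PiA hPiA.1 hPiA.2
  have hMoF : ∑ n, ∑ m, ‖Mo n m‖ ^ 2 ≤ w₀ ^ 2 * ((S.card : ℝ) * tV) := by
    have step : ∀ n m : Fin D, ‖Mo n m‖ ^ 2 ≤
        if n ∈ S ∧ m ∈ S then w₀ ^ 2 * ‖PiA n m‖ ^ 2 else 0 := by
      intro n m
      by_cases h : n ∈ S ∧ m ∈ S ∧ ¬(|E n - E m| < ΔE)
      · rw [if_pos ⟨h.1, h.2.1⟩]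
        have hnm : ¬ n = m := by
          intro he
          exact h.2.2 (by simpa [he] using hΔE)
        have hge : ΔE ≤ |E m - E n| := by
          rw [abs_sub_comm]
          exact not_lt.mp h.2.2
        have h1 := hband (E m - E n) hge
        simp only [hMo, Matrix.of_apply, devEl]
        rw [if_pos h, if_neg hnm, sub_zero, norm_mul]
        have h2 := norm_nonneg (fourier w (E m - E n))
        have h3 := norm_nonneg (PiA n m)
        rw [mul_pow]
        have ha2 : ‖fourier w (E m - E n)‖ ^ 2 ≤ w₀ ^ 2 := by nlinarith
        nlinarith [mul_le_mul_of_nonneg_right ha2 (sq_nonneg (‖PiA n m‖))]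
      · simp only [hMo, Matrix.of_apply]
        rw [if_neg h, norm_zero]
        split_ifs with h'
        · nlinarith [mul_nonneg (sq_nonneg w₀) (sq_nonneg (‖PiA n m‖))]
        · norm_num
    calc ∑ n, ∑ m, ‖Mo n m‖ ^ 2
        ≤ ∑ n : Fin D, ∑ m : Fin D,
          (if n ∈ S ∧ m ∈ S then w₀ ^ 2 * ‖PiA n m‖ ^ 2 else 0) :=
          Finset.sum_le_sum fun n _ => Finset.sum_le_sum fun m _ => step n m
      _ = ∑ n ∈ S, ∑ m ∈ S, w₀ ^ 2 * ‖PiA n m‖ ^ 2 := by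
          rw [← Finset.sum_subset (Finset.subset_univ S) (fun n _ hn => by simp [hn])]
          refine Finset.sum_congr rfl fun n hn => ?_
          rw [← Finset.sum_subset (Finset.subset_univ S) (fun m _ hm => by simp [hm])]
          exact Finset.sum_congr rfl fun m hm => by simp [hn, hm]
      _ = w₀ ^ 2 * ∑ n ∈ S, ∑ m ∈ S, ‖PiA n m‖ ^ 2 := by
          rw [Finset.mul_sum]
          exact Finset.sum_congr rfl fun n _ => (Finset.mul_sum _ _ _).symm
      _ ≤ w₀ ^ 2 * ((PiA * shellProj S).trace).re := by
          apply mul_le_mul_of_nonneg_left _ (sq_nonneg w₀)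
          exact shell_frobenius_le S PiA hPiA.1 hPiA.2
      _ = w₀ ^ 2 * ((S.card : ℝ) * tV) := by rw [htr]
  have hOsum : ∑ k, ‖O k‖ ≤ (S.card : ℝ) * (w₀ * Real.sqrt tV) := by
    have c1 := sum_abs_le_sqrt (fun k => ‖O k‖) (fun k => norm_nonneg _)
    have hsq : Real.sqrt tV ^ 2 = tV := Real.sq_sqrt htVnn
    have c2 : Real.sqrt ((S.card : ℝ) * ∑ k, ‖O k‖ ^ 2)
        ≤ (S.card : ℝ) * (w₀ * Real.sqrt tV) := by
      have hle : (S.card : ℝ) * ∑ k, ‖O k‖ ^ 2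
          ≤ ((S.card : ℝ) * (w₀ * Real.sqrt tV)) ^ 2 := by
        calc (S.card : ℝ) * ∑ k, ‖O k‖ ^ 2
            ≤ (S.card : ℝ) * (w₀ ^ 2 * ((S.card : ℝ) * tV)) :=
              mul_le_mul_of_nonneg_left (le_trans hOsq hMoF) hcard.le
          _ = ((S.card : ℝ) * (w₀ * Real.sqrt tV)) ^ 2 := by
              rw [show ((S.card : ℝ) * (w₀ * Real.sqrt tV)) ^ 2
                  = (S.card : ℝ)^2 * w₀^2 * (Real.sqrt tV ^ 2) by ring, hsq]
              ring
      calc Real.sqrt ((S.card : ℝ) * ∑ k, ‖O k‖ ^ 2)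
          ≤ Real.sqrt (((S.card : ℝ) * (w₀ * Real.sqrt tV)) ^ 2) := Real.sqrt_le_sqrt hle
        _ = (S.card : ℝ) * (w₀ * Real.sqrt tV) := Real.sqrt_sq (by positivity)
    calc ∑ k, ‖O k‖
        ≤ Real.sqrt ((S.card : ℝ) * ∑ k, ‖O k‖ ^ 2) := by simpa using c1
      _ ≤ (S.card : ℝ) * (w₀ * Real.sqrt tV) := c2
  -- counting
  set F := Finset.univ.filter fun k : Fin S.card =>
      lam ≤ ‖(∫ t : ℝ, (w t : ℂ) * expVal PiA ((U E t).mulVec (ψ k))) -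
        (thermVal S PiA : ℂ)‖ with hF
  have hcount : lam * (F.card : ℝ) ≤
      ∑ k, ‖(∫ t : ℝ, (w t : ℂ) * expVal PiA ((U E t).mulVec (ψ k))) -
        (thermVal S PiA : ℂ)‖ := by
    calc lam * (F.card : ℝ) = ∑ _k ∈ F, lam := by
          rw [Finset.sum_const, nsmul_eq_mul]; ring
      _ ≤ ∑ k ∈ F, ‖(∫ t : ℝ, (w t : ℂ) * expVal PiA ((U E t).mulVec (ψ k))) -
            (thermVal S PiA : ℂ)‖ :=
          Finset.sum_le_sum fun k hk => (Finset.mem_filter.mp hk).2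
      _ ≤ ∑ k, ‖(∫ t : ℝ, (w t : ℂ) * expVal PiA ((U E t).mulVec (ψ k))) -
            (thermVal S PiA : ℂ)‖ :=
          Finset.sum_le_sum_of_subset_of_nonneg (Finset.filter_subset _ _)
            (fun k _ _ => norm_nonneg _)
  have habs : ∀ k, ‖(∫ t : ℝ, (w t : ℂ) * expVal PiA ((U E t).mulVec (ψ k))) -
      (thermVal S PiA : ℂ)‖ ≤ ‖B k‖ + ‖O k‖ := by
    intro k
    rw [show ((∫ t : ℝ, (w t : ℂ) * expVal PiA ((U E t).mulVec (ψ k))) -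
        (thermVal S PiA : ℂ)) = B k + O k from lamk k]
    exact norm_add_le _ _
  have total : lam * (F.card : ℝ) < (S.card : ℝ) * ε + (S.card : ℝ) * (w₀ * Real.sqrt tV) := by
    calc lam * (F.card : ℝ)
        ≤ ∑ k, ‖(∫ t : ℝ, (w t : ℂ) * expVal PiA ((U E t).mulVec (ψ k))) -
            (thermVal S PiA : ℂ)‖ := hcount
      _ ≤ ∑ k, (‖B k‖ + ‖O k‖) :=
          Finset.sum_le_sum fun k _ => habs k
      _ = (∑ k, ‖B k‖) + ∑ k, ‖O k‖ := Finset.sum_add_distrib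
      _ < (S.card : ℝ) * ε + (S.card : ℝ) * (w₀ * Real.sqrt tV) := by
          linarith [hBsum, hOsum]
  have hsqrt2 : (1:ℝ) ≤ Real.sqrt 2 := by
    rw [show (1:ℝ) = Real.sqrt 1 from (Real.sqrt_one).symm]
    exact Real.sqrt_le_sqrt (by norm_num)
  have hXnn : 0 ≤ ε + w₀ * Real.sqrt tV := by positivity
  have final : (F.card : ℝ) < (S.card : ℝ) * (ε + w₀ * Real.sqrt tV) / lam := by
    rw [lt_div_iff₀ hlam]
    nlinarith [total]
  have hrhs : (S.card : ℝ) * (ε + w₀ * Real.sqrt tV) / lam ≤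
      Real.sqrt 2 * (S.card : ℝ) / lam * (ε + w₀ * Real.sqrt tV) := by
    rw [div_mul_eq_mul_div]
    apply (div_le_div_iff_of_pos_right hlam).mpr
    have h1 : (S.card : ℝ) * (ε + w₀ * Real.sqrt tV)
        ≤ (Real.sqrt 2 * (S.card : ℝ)) * (ε + w₀ * Real.sqrt tV) :=
      mul_le_mul_of_nonneg_right (by nlinarith [hsqrt2, hcard]) hXnn
    linarith [h1]
  calc (F.card : ℝ) < (S.card : ℝ) * (ε + w₀ * Real.sqrt tV) / lam := final
    _ ≤ Real.sqrt 2 * (S.card : ℝ) / lam * (ε + w₀ * Real.sqrt tV) := hrhs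


end QET
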